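/- Let x_1,...,x_n be distinct elements of F_q, let f ∈ F_q[X] with deg(f) < k, and let y ∈ F_q^n with y_i = f(x_i) + e_i where the error vector e has Hamming weight t ≤ ⌊(n-k)/2⌋. Suppose (E_1, N_1) and (E_2, N_2) are nonzero pairs of polynomials with deg(E_i) ≤ ⌊(n-k)/2⌋ and deg(N_i) < k + ⌈(n-k)/2⌉ satisfying y_i·E_j(x_i) = N_j(x_i) for all i and j ∈ {1,2}. Then N_1·E_2 = N_2·E_1, and N_1/E_1 = N_2/E_2 = f as rational functions. -/

import Mathlib

open Polynomial Finset

lemma bw_aux (F : Type) [Field F] [Fintype F] [DecidableEq F] (n k t : ℕ) (hkn : k ≤ n)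
    (x : Fin n → F) (hx : Function.Injective x)
    (f : Polynomial F) (hf : f.degree < k)
    (e : Fin n → F) (ht : hammingNorm e = t) (htle : t ≤ (n - k) / 2)
    (y : Fin n → F) (hy : ∀ i, y i = Polynomial.eval (x i) f + e i)
    (E N : Polynomial F) (hne : ¬(E = 0 ∧ N = 0))
    (hE : E.degree ≤ ((n - k) / 2 : ℕ))
    (hN : N.degree < (k + (n - k + 1) / 2 : ℕ))
    (hkey : ∀ i, y i * Polynomial.eval (x i) E = Polynomial.eval (x i) N) :
    E ≠ 0 ∧ N = E * f := by
  set D : ℕ := k + (n - k + 1) / 2 with hD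
  set R : Polynomial F := N - E * f with hR
  -- degree bound on R
  have hEf : (E * f).degree < (D : ℕ) := by
    rw [degree_mul]
    calc E.degree + f.degree < (((n - k) / 2 : ℕ) : WithBot ℕ) + (k : ℕ) :=
          (by
            by_cases hE0 : E = 0
            · simp [hE0]
            · exact WithBot.add_lt_add_of_le_of_lt (degree_ne_bot.mpr hE0) hE hf)
      _ = (((n - k) / 2 + k : ℕ) : WithBot ℕ) := by push_cast; ring
      _ ≤ (D : ℕ) := by
          rw [Nat.cast_le]; omega
  have hRdeg : R.degree < (D : ℕ) :=
    lt_of_le_of_lt (degree_sub_le _ _) (max_lt hN hEf)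
  -- root set
  have hcardfilter : #{i : Fin n | e i = 0} = n - t := by
    have h1 : #{i : Fin n | ¬ e i = 0} = t := ht
    have := Finset.card_filter_add_card_filter_not (s := (univ : Finset (Fin n)))
      (p := fun i => e i = 0)
    simp only [Finset.card_univ, Fintype.card_fin] at this
    omega
  have hDle : D ≤ n - t := by omega
  have hR0 : R = 0 := by
    by_contra hR0
    have hnat : R.natDegree < D := (natDegree_lt_iff_degree_lt hR0).mpr hRdeg
    have heval : ∀ z ∈ ({i : Fin n | e i = 0} : Finset (Fin n)).image x, R.eval z = 0 := by
      intro z hz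
      simp only [Finset.mem_image, Finset.mem_filter, Finset.mem_univ, true_and] at hz
      obtain ⟨i, hi, rfl⟩ := hz
      have := hkey i
      simp [hR, hy i, hi] at this ⊢
      linear_combination -this
    have hcard : R.natDegree < #(({i : Fin n | e i = 0} : Finset (Fin n)).image x) := by
      rw [Finset.card_image_of_injective _ hx, hcardfilter]
      omega
    exact hR0 (Polynomial.eq_zero_of_natDegree_lt_card_of_eval_eq_zero' R _ heval hcard)
  have hNEf : N = E * f := by
    have := hR0
    rw [hR, sub_eq_zero] at this
    exact this
  refine ⟨?_, hNEf⟩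
  intro hE0
  exact hne ⟨hE0, by simp [hNEf, hE0]⟩

/-- Berlekamp–Welch uniqueness lemma: any two nonzero solutions `(E₁,N₁)`, `(E₂,N₂)` of the
linearized key equations determine the same rational function, equal to `f`. -/
theorem stmt_6 (F : Type) [Field F] [Fintype F] [DecidableEq F] (n k t : ℕ) (hkn : k ≤ n)
    (x : Fin n → F) (hx : Function.Injective x)
    (f : Polynomial F) (hf : f.degree < k)
    (e : Fin n → F) (ht : hammingNorm e = t) (htle : t ≤ (n - k) / 2)
    (y : Fin n → F) (hy : ∀ i, y i = Polynomial.eval (x i) f + e i)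
    (E₁ N₁ E₂ N₂ : Polynomial F)
    (h₁ne : ¬(E₁ = 0 ∧ N₁ = 0)) (h₂ne : ¬(E₂ = 0 ∧ N₂ = 0))
    (hE₁ : E₁.degree ≤ ((n - k) / 2 : ℕ)) (hE₂ : E₂.degree ≤ ((n - k) / 2 : ℕ))
    (hN₁ : N₁.degree < (k + (n - k + 1) / 2 : ℕ)) (hN₂ : N₂.degree < (k + (n - k + 1) / 2 : ℕ))
    (hkey₁ : ∀ i, y i * Polynomial.eval (x i) E₁ = Polynomial.eval (x i) N₁)
    (hkey₂ : ∀ i, y i * Polynomial.eval (x i) E₂ = Polynomial.eval (x i) N₂) :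
    N₁ * E₂ = N₂ * E₁ ∧ E₁ ≠ 0 ∧ E₂ ≠ 0 ∧ N₁ = E₁ * f ∧ N₂ = E₂ * f := by
  obtain ⟨hE₁0, h1⟩ := bw_aux F n k t hkn x hx f hf e ht htle y hy E₁ N₁ h₁ne hE₁ hN₁ hkey₁
  obtain ⟨hE₂0, h2⟩ := bw_aux F n k t hkn x hx f hf e ht htle y hy E₂ N₂ h₂ne hE₂ hN₂ hkey₂
  exact ⟨by rw [h1, h2]; ring, hE₁0, hE₂0, h1, h2⟩
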